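/- Let X be a metric space, let μ be a Borel probability measure on X, and let x₁, x₂ ∈ X with x₂ ∈ supp(μ). Define, for ε > 0, R°(ε) := μ(B(x₁,ε))/μ(B(x₂,ε)) using open balls and R̄(ε) := μ(B̄(x₁,ε))/μ(B̄(x₂,ε)) using closed balls. Then lim_{ε→0} R̄(ε) exists (in ℝ) if and only if lim_{ε→0} R°(ε) exists, in which case the two limits are equal. -/

import Mathlib

open MeasureTheory Metric Filter Set Topology ENNReal

noncomputable section

/-- The topological support of a Borel measure on a metric space: the set of points all of
whose open balls have positive measure. -/
def measureSupport {X : Type*} [PseudoMetricSpace X] [MeasurableSpace X]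
    (μ : Measure X) : Set X :=
  {x | ∀ r > 0, 0 < μ (Metric.ball x r)}

/-- `I` is an Onsager--Machlup functional for `μ` on `E`: for all `x₁ x₂ ∈ E`, the ratio of
small-ball probabilities tends to `exp (I x₂ - I x₁)` as the radius tends to `0⁺`. -/
def IsOMFunctional {X : Type*} [PseudoMetricSpace X] [MeasurableSpace X]
    (μ : Measure X) (E : Set X) (I : X → ℝ) : Prop :=
  ∀ x₁ ∈ E, ∀ x₂ ∈ E,
    Filter.Tendsto (fun r : ℝ => μ (Metric.ball x₁ r) / μ (Metric.ball x₂ r))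
      (𝓝[>] 0) (𝓝 (ENNReal.ofReal (Real.exp (I x₂ - I x₁))))

/-- Property `M(μ, E)`: there is `x⋆ ∈ E` such that for every `x ∉ E` the small-ball
probability ratio `μ(B(x,r)) / μ(B(x⋆,r))` tends to `0` as `r → 0⁺`. -/
def PropertyM {X : Type*} [PseudoMetricSpace X] [MeasurableSpace X]
    (μ : Measure X) (E : Set X) : Prop :=
  ∃ xs ∈ E, ∀ x ∉ E,
    Filter.Tendsto (fun r : ℝ => μ (Metric.ball x r) / μ (Metric.ball xs r)) (𝓝[>] 0) (𝓝 0)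

/-- Left limit: the measure of closed balls tends to the measure of the open ball. -/
lemma tendsto_measure_closedBall_nhdsWithin_Iio
    {X : Type*} [MetricSpace X] [MeasurableSpace X] [BorelSpace X]
    (μ : Measure X) (x : X) (ε : ℝ) :
    Tendsto (fun δ => μ (closedBall x δ)) (𝓝[<] ε) (𝓝 (μ (ball x ε))) := by
  have hmono : Monotone (fun δ => μ (closedBall x δ)) :=
    fun a b hab => measure_mono (closedBall_subset_closedBall hab)
  have := hmono.tendsto_nhdsLT ε
  convert this using 2
  apply le_antisymm
  · rcases le_or_gt ε 0 with hε | hε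
    · simp [ball_eq_empty.2 hε]
    · have hset : ball x ε = ⋃ n : ℕ, closedBall x (ε - ε / (n + 1)) := by
        ext y
        simp only [mem_ball, mem_iUnion, mem_closedBall]
        constructor
        · intro hy
          obtain ⟨n, hn⟩ := exists_nat_gt (ε / (ε - dist y x))
          refine ⟨n, ?_⟩
          have h1 : 0 < ε - dist y x := by linarith
          have h2 : ε / (ε - dist y x) < n + 1 := by linarith
          have h3 : ε / (n + 1) < ε - dist y x := by
            rw [div_lt_iff₀ (by positivity)] at h2 ⊢
            nlinarith
          linarith
        · rintro ⟨n, hn⟩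
          have : 0 < ε / (n + 1) := by positivity
          linarith
      rw [hset, (directed_of_isDirected_le fun a b hab =>
        closedBall_subset_closedBall (by
          have : (a:ℝ) + 1 ≤ b + 1 := by exact_mod_cast Nat.succ_le_succ hab
          gcongr)).measure_iUnion]
      apply iSup_le fun n => ?_
      apply le_csSup (OrderTop.bddAbove _)
      refine mem_image_of_mem _ ?_
      simp only [mem_Iio]
      have h0 : 0 < ε / (n+1 : ℝ) := by positivity
      linarith
  · apply csSup_le (Set.Nonempty.image _ ⟨ε - 1, by simp⟩)
    rintro _ ⟨δ, hδ, rfl⟩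
    exact measure_mono (closedBall_subset_ball hδ)

/-- Right limit: the measure of open balls tends to the measure of the closed ball. -/
lemma tendsto_measure_ball_nhdsWithin_Ioi
    {X : Type*} [MetricSpace X] [MeasurableSpace X] [BorelSpace X]
    (μ : Measure X) [IsFiniteMeasure μ] (x : X) (ε : ℝ) :
    Tendsto (fun δ => μ (ball x δ)) (𝓝[>] ε) (𝓝 (μ (closedBall x ε))) := by
  have key := tendsto_measure_biInter_gt (μ := μ) (s := fun r => ball x r) (a := ε)
    (fun r _ => measurableSet_ball.nullMeasurableSet)
    (fun i j _ hij => ball_subset_ball hij)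
    ⟨ε + 1, by linarith, measure_ne_top _ _⟩
  have hset : (⋂ r > ε, ball x r) = closedBall x ε := by
    ext y
    simp only [mem_iInter, mem_ball, mem_closedBall]
    constructor
    · intro h
      by_contra hy
      push_neg at hy
      have := h ((ε + dist y x) / 2) (by linarith)
      linarith
    · intro h r hr
      linarith
  rw [hset] at key
  exact key

theorem lim_closed_ball_ratio_iff_lim_open_ball_ratio
    {X : Type*} [MetricSpace X] [MeasurableSpace X] [BorelSpace X]
    (μ : Measure X) [IsProbabilityMeasure μ]
    (x₁ x₂ : X) (hx₂ : x₂ ∈ measureSupport μ) :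
    ∀ L : ℝ≥0∞,
      Filter.Tendsto
          (fun ε : ℝ => μ (Metric.closedBall x₁ ε) / μ (Metric.closedBall x₂ ε))
          (𝓝[>] 0) (𝓝 L)
        ↔ Filter.Tendsto
          (fun ε : ℝ => μ (Metric.ball x₁ ε) / μ (Metric.ball x₂ ε))
          (𝓝[>] 0) (𝓝 L) := by
  intro L
  set fc : ℝ → ℝ≥0∞ := fun ε => μ (closedBall x₁ ε) / μ (closedBall x₂ ε) with hfc_def
  set fo : ℝ → ℝ≥0∞ := fun ε => μ (ball x₁ ε) / μ (ball x₂ ε) with hfo_def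
  -- for ε > 0, fc ε is the right limit of fo, and fo ε is the left limit of fc
  have hcb_ne : ∀ ε > (0:ℝ), μ (closedBall x₂ ε) ≠ 0 := fun ε hε =>
    (lt_of_lt_of_le (hx₂ ε hε) (measure_mono ball_subset_closedBall)).ne'
  have hob_ne : ∀ ε > (0:ℝ), μ (ball x₂ ε) ≠ 0 := fun ε hε => (hx₂ ε hε).ne'
  have hlimc : ∀ ε > (0:ℝ), Tendsto fo (𝓝[>] ε) (𝓝 (fc ε)) := by
    intro ε hε
    exact (ENNReal.Tendsto.div (tendsto_measure_ball_nhdsWithin_Ioi μ x₁ ε)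
      (Or.inr (hcb_ne ε hε)) (tendsto_measure_ball_nhdsWithin_Ioi μ x₂ ε)
      (Or.inl (measure_ne_top _ _)))
  have hlimo : ∀ ε > (0:ℝ), Tendsto fc (𝓝[<] ε) (𝓝 (fo ε)) := by
    intro ε hε
    exact (ENNReal.Tendsto.div (tendsto_measure_closedBall_nhdsWithin_Iio μ x₁ ε)
      (Or.inr (hob_ne ε hε)) (tendsto_measure_closedBall_nhdsWithin_Iio μ x₂ ε)
      (Or.inl (measure_ne_top _ _)))
  -- generic transfer lemma
  have key : ∀ (f g : ℝ → ℝ≥0∞),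
      (∀ c : ℝ≥0∞, (∀ᶠ δ in 𝓝[>] (0:ℝ), g δ ≤ c) → ∀ᶠ ε in 𝓝[>] (0:ℝ), f ε ≤ c) →
      (∀ c : ℝ≥0∞, (∀ᶠ δ in 𝓝[>] (0:ℝ), c ≤ g δ) → ∀ᶠ ε in 𝓝[>] (0:ℝ), c ≤ f ε) →
      Tendsto g (𝓝[>] (0:ℝ)) (𝓝 L) → Tendsto f (𝓝[>] (0:ℝ)) (𝓝 L) := by
    intro f g hub hlb hg
    rw [tendsto_order]
    constructor
    · intro a ha
      obtain ⟨a', ha1, ha2⟩ := exists_between ha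
      have hev : ∀ᶠ δ in 𝓝[>] (0:ℝ), a' ≤ g δ :=
        hg.eventually_const_le ha2
      filter_upwards [hlb a' hev] with ε hε
      exact lt_of_lt_of_le ha1 hε
    · intro b hb
      obtain ⟨b', hb1, hb2⟩ := exists_between hb
      have hev : ∀ᶠ δ in 𝓝[>] (0:ℝ), g δ ≤ b' :=
        hg.eventually_le_const hb1
      filter_upwards [hub b' hev] with ε hε
      exact lt_of_le_of_lt hε hb2
  have hub_o : ∀ c : ℝ≥0∞, (∀ᶠ δ in 𝓝[>] (0:ℝ), fc δ ≤ c) → ∀ᶠ ε in 𝓝[>] (0:ℝ), fo ε ≤ c := by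
    intro c hc
    obtain ⟨η, hη, hηs⟩ := (nhdsGT_basis (0:ℝ)).eventually_iff.mp hc
    refine (nhdsGT_basis (0:ℝ)).eventually_iff.mpr ⟨η, hη, fun ε hε => ?_⟩
    refine le_of_tendsto (hlimo ε hε.1) ?_
    filter_upwards [Ioo_mem_nhdsLT_of_mem (⟨hε.1, le_refl ε⟩ : ε ∈ Ioc 0 ε)] with δ hδ
    exact hηs ⟨hδ.1, hδ.2.trans hε.2⟩
  have hlb_o : ∀ c : ℝ≥0∞, (∀ᶠ δ in 𝓝[>] (0:ℝ), c ≤ fc δ) → ∀ᶠ ε in 𝓝[>] (0:ℝ), c ≤ fo ε := by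
    intro c hc
    obtain ⟨η, hη, hηs⟩ := (nhdsGT_basis (0:ℝ)).eventually_iff.mp hc
    refine (nhdsGT_basis (0:ℝ)).eventually_iff.mpr ⟨η, hη, fun ε hε => ?_⟩
    refine ge_of_tendsto (hlimo ε hε.1) ?_
    filter_upwards [Ioo_mem_nhdsLT_of_mem (⟨hε.1, le_refl ε⟩ : ε ∈ Ioc 0 ε)] with δ hδ
    exact hηs ⟨hδ.1, hδ.2.trans hε.2⟩
  have hub_c : ∀ c : ℝ≥0∞, (∀ᶠ δ in 𝓝[>] (0:ℝ), fo δ ≤ c) → ∀ᶠ ε in 𝓝[>] (0:ℝ), fc ε ≤ c := by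
    intro c hc
    obtain ⟨η, hη, hηs⟩ := (nhdsGT_basis (0:ℝ)).eventually_iff.mp hc
    refine (nhdsGT_basis (0:ℝ)).eventually_iff.mpr ⟨η, hη, fun ε hε => ?_⟩
    refine le_of_tendsto (hlimc ε hε.1) ?_
    filter_upwards [Ioo_mem_nhdsGT_of_mem (⟨le_refl ε, hε.2⟩ : ε ∈ Ico ε η)] with δ hδ
    exact hηs ⟨hε.1.trans hδ.1, hδ.2⟩
  have hlb_c : ∀ c : ℝ≥0∞, (∀ᶠ δ in 𝓝[>] (0:ℝ), c ≤ fo δ) → ∀ᶠ ε in 𝓝[>] (0:ℝ), c ≤ fc ε := by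
    intro c hc
    obtain ⟨η, hη, hηs⟩ := (nhdsGT_basis (0:ℝ)).eventually_iff.mp hc
    refine (nhdsGT_basis (0:ℝ)).eventually_iff.mpr ⟨η, hη, fun ε hε => ?_⟩
    refine ge_of_tendsto (hlimc ε hε.1) ?_
    filter_upwards [Ioo_mem_nhdsGT_of_mem (⟨le_refl ε, hε.2⟩ : ε ∈ Ico ε η)] with δ hδ
    exact hηs ⟨hε.1.trans hδ.1, hδ.2⟩
  exact ⟨fun h => key fo fc hub_o hlb_o h, fun h => key fc fo hub_c hlb_c h⟩
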